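/- The determinants of the leaf and augmented covariance matrices satisfy det Σ_*^{(h)} = (1 − (2ρ²)^h / R_h) · det Σ^{(h)}; equivalently, det Σ^{(h)} / det Σ_*^{(h)} = R_h / (R_h − (2ρ²)^h) (note R_h ≥ 1 > 0, and for h ≥ 1 one has R_h > (2ρ²)^h). -/

import Mathlib

open Finset

/-- Length of the longest common prefix of two binary strings of length `h`
(equal to `h` when the strings coincide). -/
def lcpLen (h : ℕ) (s t : Fin h → Bool) : ℕ :=
  (Finset.univ.filter (fun i : Fin h => ∀ j : Fin h, j ≤ i → s j = t j)).card

/-- Tree distance between two leaves of the `h`-level balanced binary tree. -/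
def treeDist (h : ℕ) (s t : Fin h → Bool) : ℕ :=
  2 * (h - lcpLen h s t)

/-- Leaf covariance matrix `Σ^{(h)}` with correlation parameter `ρ`. -/
noncomputable def SigmaLeaf (h : ℕ) (ρ : ℝ) :
    Matrix (Fin h → Bool) (Fin h → Bool) ℝ :=
  fun s t => ρ ^ treeDist h s t

/-- `R_h = 1 + Σ_{l=1}^{h} ρ^{2l} 2^{l−1}`. -/
noncomputable def Rh (h : ℕ) (ρ : ℝ) : ℝ :=
  1 + ∑ l ∈ Finset.range h, ρ ^ (2 * (l + 1)) * 2 ^ l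

/-- Augmented covariance matrix `Σ_*^{(h)}`, indexed by `{root} ∪ {0,1}^h`
(`none` is the root). -/
noncomputable def SigmaStar (h : ℕ) (ρ : ℝ) :
    Matrix (Option (Fin h → Bool)) (Option (Fin h → Bool)) ℝ :=
  fun u v =>
    match u, v with
    | none, none => 1
    | none, some _ => ρ ^ h
    | some _, none => ρ ^ h
    | some s, some t => ρ ^ treeDist h s t


lemma lcpLen_le (h : ℕ) (s t : Fin h → Bool) : lcpLen h s t ≤ h :=
  le_trans (Finset.card_filter_le _ _) (by simp)


lemma lcpLen_comm (h : ℕ) (s t : Fin h → Bool) : lcpLen h s t = lcpLen h t s := by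
  unfold lcpLen
  congr 1
  apply Finset.filter_congr
  intro i _
  constructor <;> intro H j hj <;> exact (H j hj).symm


lemma lcpLen_cons (h : ℕ) (b c : Bool) (s t : Fin h → Bool) :
    lcpLen (h+1) (Fin.cons b s) (Fin.cons c t) =
      if b = c then lcpLen h s t + 1 else 0 := by
  unfold lcpLen
  by_cases hbc : b = c
  · rw [if_pos hbc]
    have hset : (Finset.univ.filter (fun i : Fin (h+1) =>
        ∀ j : Fin (h+1), j ≤ i → (Fin.cons b s : Fin (h+1) → Bool) j = (Fin.cons c t : Fin (h+1) → Bool) j)) =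
        insert (0 : Fin (h+1))
          ((Finset.univ.filter (fun i : Fin h => ∀ j : Fin h, j ≤ i → s j = t j)).image Fin.succ) := by
      ext i
      refine Fin.cases ?_ ?_ i
      · simp only [Finset.mem_filter, Finset.mem_univ, true_and, Finset.mem_insert,
          Finset.mem_image]
        constructor
        · intro _; exact Or.inl trivial
        · intro _ j hj
          have : j = 0 := Fin.le_zero_iff.mp hj
          subst this
          simp [hbc]
      · intro i'
        simp only [Finset.mem_filter, Finset.mem_univ, true_and, Finset.mem_insert,
          Finset.mem_image]
        constructor
        · intro H
          right
          refine ⟨i', ⟨fun j hj => ?_, rfl⟩⟩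
          have := H j.succ (Fin.succ_le_succ_iff.mpr hj)
          simpa using this
        · rintro (habs | ⟨i'', hQ, hsucc⟩)
          · exact absurd habs (Fin.succ_ne_zero i')
          · have : i'' = i' := Fin.succ_injective _ hsucc
            subst this
            intro j
            refine Fin.cases ?_ ?_ j
            · intro _; simp [hbc]
            · intro j' hj'
              simp only [Fin.cons_succ]
              exact hQ j' (Fin.succ_le_succ_iff.mp hj')
    have hnm : (0 : Fin (h+1)) ∉
        ((Finset.univ.filter (fun i : Fin h => ∀ j : Fin h, j ≤ i → s j = t j)).image Fin.succ) := by
      simp only [Finset.mem_image, not_exists]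
      intro x
      simp [Fin.succ_ne_zero]
    rw [hset, Finset.card_insert_of_notMem hnm,
      Finset.card_image_of_injective _ (Fin.succ_injective h)]
  · rw [if_neg hbc]
    rw [Finset.card_eq_zero, Finset.filter_eq_empty_iff]
    intro i _
    push_neg
    refine ⟨0, Fin.zero_le i, by simpa using hbc⟩


lemma treeDist_cons (h : ℕ) (b c : Bool) (s t : Fin h → Bool) :
    treeDist (h+1) (Fin.cons b s) (Fin.cons c t) =
      if b = c then treeDist h s t else 2 * (h + 1) := by
  unfold treeDist
  rw [lcpLen_cons]
  by_cases hbc : b = c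
  · simp [hbc, Nat.succ_sub_succ]
  · simp [hbc]


lemma treeDist_comm (h : ℕ) (s t : Fin h → Bool) : treeDist h s t = treeDist h t s := by
  unfold treeDist; rw [lcpLen_comm]


lemma sum_cons (h : ℕ) (F : (Fin (h+1) → Bool) → ℝ) :
    ∑ x, F x = (∑ y : Fin h → Bool, F (Fin.cons false y))
      + ∑ y : Fin h → Bool, F (Fin.cons true y) := by
  rw [← (Fin.consEquiv (fun _ : Fin (h+1) => Bool)).sum_comp F]
  rw [Fintype.sum_prod_type, Fintype.sum_bool]
  rw [add_comm]
  rfl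


lemma card_fun (h : ℕ) : Fintype.card (Fin h → Bool) = 2 ^ h := by
  simp


lemma rowSum (h : ℕ) (ρ : ℝ) (s : Fin h → Bool) :
    ∑ t, SigmaLeaf h ρ s t = Rh h ρ := by
  induction h with
  | zero =>
      rw [Fintype.sum_unique]
      simp [SigmaLeaf, treeDist, Rh]
  | succ h ih =>
      rw [← Fin.cons_self_tail s]
      rw [sum_cons (h := h) (F := fun t => SigmaLeaf (h+1) ρ (Fin.cons (s 0) (Fin.tail s)) t)]
      have key : ∀ c : Bool, ∀ y : Fin h → Bool,
          SigmaLeaf (h+1) ρ (Fin.cons (s 0) (Fin.tail s)) (Fin.cons c y) =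
            if s 0 = c then SigmaLeaf h ρ (Fin.tail s) y else ρ ^ (2 * (h+1)) := by
        intro c y
        unfold SigmaLeaf
        rw [treeDist_cons]
        by_cases hc : s 0 = c <;> simp [hc]
      simp only [key]
      have hconst : ∑ _y : Fin h → Bool, ρ ^ (2 * (h+1)) = (2:ℝ)^h * ρ ^ (2*(h+1)) := by
        rw [Finset.sum_const, Finset.card_univ, card_fun, nsmul_eq_mul]
        push_cast
        ring
      have hRh : Rh (h+1) ρ = Rh h ρ + ρ ^ (2*(h+1)) * 2^h := by
        unfold Rh
        rw [Finset.sum_range_succ]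
        ring
      cases hb : s 0 <;>
        simp only [hb, reduceIte, Bool.false_eq_true, Bool.true_eq_false, if_false, if_true] <;>
        rw [ih, hconst, hRh] <;> ring


lemma SigmaLeaf_cons (h : ℕ) (ρ : ℝ) (b c : Bool) (s t : Fin h → Bool) :
    SigmaLeaf (h+1) ρ (Fin.cons b s) (Fin.cons c t) =
      if b = c then SigmaLeaf h ρ s t else ρ ^ (2*(h+1)) := by
  unfold SigmaLeaf
  rw [treeDist_cons]
  by_cases hbc : b = c <;> simp [hbc]


lemma cross_sum (h : ℕ) (u v : (Fin h → Bool) → ℝ) (C : ℝ) :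
    ∑ y, ∑ z, u y * C * v z = C * ((∑ y, u y) * (∑ z, v z)) := by
  calc ∑ y, ∑ z, u y * C * v z = ∑ y, u y * C * ∑ z, v z := by
        refine Finset.sum_congr rfl fun y _ => ?_
        rw [← Finset.mul_sum]
    _ = (∑ y, u y * C) * ∑ z, v z := by rw [← Finset.sum_mul]
    _ = ((∑ y, u y) * C) * ∑ z, v z := by rw [← Finset.sum_mul]
    _ = C * ((∑ y, u y) * (∑ z, v z)) := by ring


lemma quad_decomp (h : ℕ) (ρ : ℝ) (x : (Fin (h+1) → Bool) → ℝ) :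
    ∑ s, ∑ t, x s * SigmaLeaf (h+1) ρ s t * x t =
      (∑ s, ∑ t, x (Fin.cons false s) * SigmaLeaf h ρ s t * x (Fin.cons false t))
      + (∑ s, ∑ t, x (Fin.cons true s) * SigmaLeaf h ρ s t * x (Fin.cons true t))
      + 2 * ρ ^ (2*(h+1)) *
          ((∑ s, x (Fin.cons false s)) * (∑ s, x (Fin.cons true s))) := by
  rw [sum_cons (F := fun s => ∑ t, x s * SigmaLeaf (h+1) ρ s t * x t)]
  have e2 : ∀ b : Bool, ∀ y : Fin h → Bool,
      ∑ t, x (Fin.cons b y) * SigmaLeaf (h+1) ρ (Fin.cons b y) t * x t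
        = (∑ z, x (Fin.cons b y) * (if b = false then SigmaLeaf h ρ y z else ρ^(2*(h+1)))
              * x (Fin.cons false z))
          + ∑ z, x (Fin.cons b y) * (if b = true then SigmaLeaf h ρ y z else ρ^(2*(h+1)))
              * x (Fin.cons true z) := by
    intro b y
    rw [sum_cons (F := fun t => x (Fin.cons b y) * SigmaLeaf (h+1) ρ (Fin.cons b y) t * x t)]
    simp only [SigmaLeaf_cons]
  simp only [e2, reduceIte, Bool.false_eq_true, Bool.true_eq_false, if_false, if_true]
  rw [Finset.sum_add_distrib, Finset.sum_add_distrib]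
  rw [cross_sum h (fun y => x (Fin.cons false y)) (fun z => x (Fin.cons true z)) (ρ^(2*(h+1)))]
  rw [cross_sum h (fun y => x (Fin.cons true y)) (fun z => x (Fin.cons false z)) (ρ^(2*(h+1)))]
  ring


lemma quad_lower (ρ : ℝ) (hρ0 : 0 < ρ) (hρ1 : ρ < 1) :
    ∀ h, 1 ≤ h → ∀ x : (Fin h → Bool) → ℝ,
      ρ ^ (2*h) * (∑ s, x s)^2 + (1 - ρ^2) * (∑ s, (x s)^2)
        ≤ ∑ s, ∑ t, x s * SigmaLeaf h ρ s t * x t := by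
  intro h hh
  induction h, hh using Nat.le_induction with
  | base =>
      intro x
      rw [quad_decomp 0 ρ x, sum_cons 0 x, sum_cons 0 (fun s => (x s)^2)]
      simp only [Fintype.sum_unique]
      have hSig : ∀ d e : Fin 0 → Bool, SigmaLeaf 0 ρ d e = 1 := by
        intro d e; simp [SigmaLeaf, treeDist, lcpLen]
      rw [hSig]
      set a := x (Fin.cons false default)
      set b := x (Fin.cons true default)
      norm_num
      nlinarith [sq_nonneg (a - b), sq_nonneg (a + b)]
  | succ h hh ih =>
      intro x
      have hq := quad_decomp h ρ x
      have hS := sum_cons h x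
      have hT := sum_cons h (fun s => (x s)^2)
      have iy := ih (fun s => x (Fin.cons false s))
      have iz := ih (fun s => x (Fin.cons true s))
      rw [hq, hS, hT]
      have he : ρ ^ (2*(h+1)) = ρ^(2*h) * ρ^2 := by
        rw [show 2*(h+1) = 2*h + 2 by ring, pow_add]
      have hp : (0:ℝ) < ρ^(2*h) := pow_pos hρ0 _
      set Sf := ∑ s : Fin h → Bool, x (Fin.cons false s)
      set St := ∑ s : Fin h → Bool, x (Fin.cons true s)
      rw [he]
      have h1ρ : (0:ℝ) ≤ 1 - ρ^2 := by nlinarith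
      have hkey : (0:ℝ) ≤ (1 - ρ^2) * (ρ^(2*h) * (Sf^2 + St^2)) :=
        mul_nonneg h1ρ (mul_nonneg hp.le (by positivity))
      nlinarith [iy, iz, hkey]


lemma sigmaLeaf_posdef (h : ℕ) (hh : 1 ≤ h) (ρ : ℝ) (hρ0 : 0 < ρ) (hρ1 : ρ < 1) :
    (SigmaLeaf h ρ).PosDef := by
  rw [Matrix.posDef_iff_dotProduct_mulVec]
  constructor
  · ext s t
    simp only [Matrix.conjTranspose_apply, star_trivial]
    unfold SigmaLeaf
    rw [treeDist_comm]
  · intro x hx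
    have expand : dotProduct (star x) ((SigmaLeaf h ρ).mulVec x)
        = ∑ s, ∑ t, x s * SigmaLeaf h ρ s t * x t := by
      unfold dotProduct Matrix.mulVec
      simp only [star_trivial]
      refine Finset.sum_congr rfl fun s _ => ?_
      unfold dotProduct
      rw [Finset.mul_sum]
      refine Finset.sum_congr rfl fun t _ => ?_
      ring
    rw [expand]
    have hlow := quad_lower ρ hρ0 hρ1 h hh x
    obtain ⟨s, hs⟩ : ∃ s, x s ≠ 0 := Function.ne_iff.mp hx
    have hT : 0 < ∑ s, (x s)^2 :=
      Finset.sum_pos' (fun i _ => sq_nonneg _) ⟨s, Finset.mem_univ s,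
        pow_two_pos_of_ne_zero hs⟩
    have h1 : (0:ℝ) < 1 - ρ^2 := by nlinarith
    have h2 : (0:ℝ) ≤ ρ ^ (2*h) * (∑ s, x s)^2 := by positivity
    calc (0:ℝ) < ρ ^ (2*h) * (∑ s, x s)^2 + (1 - ρ^2) * (∑ s, (x s)^2) := by nlinarith
      _ ≤ _ := hlow


lemma Rh_pos (h : ℕ) (ρ : ℝ) (hρ0 : 0 < ρ) : 0 < Rh h ρ := by
  unfold Rh
  have : (0:ℝ) ≤ ∑ l ∈ Finset.range h, ρ ^ (2 * (l + 1)) * 2 ^ l :=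
    Finset.sum_nonneg fun l _ => by positivity
  linarith


lemma Rh_succ (h : ℕ) (ρ : ℝ) : Rh (h+1) ρ = Rh h ρ + ρ ^ (2*(h+1)) * 2^h := by
  unfold Rh
  rw [Finset.sum_range_succ]
  ring


lemma Rh_gt (ρ : ℝ) (hρ0 : 0 < ρ) (hρ1 : ρ < 1) :
    ∀ h, 1 ≤ h → (2*ρ^2)^h < Rh h ρ := by
  intro h hh
  induction h, hh using Nat.le_induction with
  | base =>
      unfold Rh
      simp
      nlinarith
  | succ h hh ih =>
      have hpow : (2*ρ^2)^h = 2^h * ρ^(2*h) := by rw [mul_pow, ← pow_mul]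
      have e : ρ^(2*(h+1)) = ρ^(2*h) * ρ^2 := by
        rw [show 2*(h+1) = 2*h+2 by ring, pow_add]
      have hp2 : (0:ℝ) < 2^h * ρ^(2*h) := by positivity
      have hr2 : ρ^2 < 1 := by nlinarith
      rw [Rh_succ, pow_succ, hpow, e]
      nlinarith [mul_lt_mul_of_pos_left hr2 hp2]


/-- `det Σ_*^{(h)} = (1 − (2ρ²)^h / R_h) · det Σ^{(h)}`, equivalently
`det Σ^{(h)} / det Σ_*^{(h)} = R_h / (R_h − (2ρ²)^h)`. -/
theorem det_ratio (h : ℕ) (hh : 1 ≤ h) (ρ : ℝ) (hρ : ρ ∈ Set.Ioo (0:ℝ) 1) :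
    (SigmaStar h ρ).det = (1 - (2 * ρ ^ 2) ^ h / Rh h ρ) * (SigmaLeaf h ρ).det ∧
    (SigmaLeaf h ρ).det / (SigmaStar h ρ).det =
      Rh h ρ / (Rh h ρ - (2 * ρ ^ 2) ^ h) := by
  obtain ⟨hρ0, hρ1⟩ := hρ
  have hR : 0 < Rh h ρ := Rh_pos h ρ hρ0
  have hgt : (2*ρ^2)^h < Rh h ρ := Rh_gt ρ hρ0 hρ1 h hh
  have hdetpos : 0 < (SigmaLeaf h ρ).det := (sigmaLeaf_posdef h hh ρ hρ0 hρ1).det_pos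
  set δ : ℝ := 1 - (2*ρ^2)^h / Rh h ρ with hδdef
  have colSum : ∀ t, ∑ s, SigmaLeaf h ρ s t = Rh h ρ := by
    intro t
    rw [← rowSum h ρ t]
    refine Finset.sum_congr rfl fun s _ => ?_
    unfold SigmaLeaf
    rw [treeDist_comm]
  set c : Option (Fin h → Bool) → ℝ := fun u => Option.elim u 1 (fun _ => -(ρ^h / Rh h ρ))
    with hc
  have hrow := Matrix.det_updateRow_sum (SigmaStar h ρ) none c
  have hcnone : c none = 1 := rfl
  rw [hcnone, one_smul] at hrow
  set N : Matrix ((Fin h → Bool) ⊕ PUnit.{1}) ((Fin h → Bool) ⊕ PUnit.{1}) ℝ :=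
    Matrix.fromBlocks (SigmaLeaf h ρ) (Matrix.of fun _ _ => ρ^h) 0
      (Matrix.of fun _ _ => δ) with hN
  have hpowsplit : (2*ρ^2)^h = 2^h * (ρ^h * ρ^h) := by
    rw [mul_pow, ← pow_add, ← pow_mul]
    ring_nf
  have hMN : (SigmaStar h ρ).updateRow none (∑ k, c k • SigmaStar h ρ k) =
      N.submatrix (Equiv.optionEquivSumPUnit _) (Equiv.optionEquivSumPUnit _) := by
    ext u v
    match u with
    | some s =>
        rw [Matrix.updateRow_ne (by simp : (some s : Option (Fin h → Bool)) ≠ none)]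
        match v with
        | some t => rfl
        | none => rfl
    | none =>
        rw [Matrix.updateRow_self]
        have happ : (∑ k, c k • SigmaStar h ρ k) v = ∑ k, c k * SigmaStar h ρ k v := by
          rw [Finset.sum_apply]
          refine Finset.sum_congr rfl fun k _ => rfl
        rw [happ, Fintype.sum_option]
        match v with
        | some t =>
            have : ∀ s : Fin h → Bool, c (some s) * SigmaStar h ρ (some s) (some t)
                = -(ρ^h / Rh h ρ) * SigmaLeaf h ρ s t := fun s => rfl
            simp only [this]
            rw [← Finset.mul_sum, colSum t]
            have : c none * SigmaStar h ρ none (some t) = ρ ^ h := by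
              rw [hcnone]; ring_nf; rfl
            rw [this]
            field_simp
            show _ = (0:ℝ)
            ring
        | none =>
            have : ∀ s : Fin h → Bool, c (some s) * SigmaStar h ρ (some s) none
                = -(ρ^h / Rh h ρ) * ρ^h := fun s => rfl
            simp only [this]
            rw [Finset.sum_const, Finset.card_univ, card_fun, nsmul_eq_mul]
            have hval : c none * SigmaStar h ρ none none = 1 := by
              rw [hcnone]; ring_nf; rfl
            rw [hval]
            show (1 : ℝ) + _ = δ
            rw [hδdef, hpowsplit]
            field_simp
            push_cast
            ring
  have hdetN : N.det = (SigmaLeaf h ρ).det * δ := by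
    rw [hN, Matrix.det_fromBlocks_zero₂₁]
    congr 1
    rw [Matrix.det_unique]
    rfl
  have h1 : (SigmaStar h ρ).det = δ * (SigmaLeaf h ρ).det := by
    rw [← hrow, hMN, Matrix.det_submatrix_equiv_self, hdetN]
    ring
  have hδpos : 0 < δ := by
    rw [hδdef, sub_pos, div_lt_one hR]
    exact hgt
  constructor
  · rw [h1]
  · rw [h1]
    have hstep : (SigmaLeaf h ρ).det / (δ * (SigmaLeaf h ρ).det) = 1 / δ := by
      rw [mul_comm, ← div_div, div_self (ne_of_gt hdetpos)]
    rw [hstep, hδdef]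
    have hRX : Rh h ρ - (2*ρ^2)^h ≠ 0 := ne_of_gt (by linarith)
    field_simp
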